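/- Let n ∈ ℤ, k ≥ 0, and let m be an integer with 1 ≤ m ≤ n−1. Then for every configuration ρ ∈ Ω₀ one has B_n R_k J_m ρ = J_m B_n R_k ρ. (Lemma 3.2(i)) -/

import Mathlib

open Set

/-- `Ω₀`: a configuration `ρ : ℤ → Bool` is admissible when its support
`{x : ℤ | ρ x = true}` is bounded above. -/
def BddSupport (ρ : ℤ → Bool) : Prop := BddAbove {x : ℤ | ρ x = true}

/-- The queue-length `S(ρ, x)`: the number of particles of `ρ` strictly to the right
of `x`. -/
noncomputable def qS (ρ : ℤ → Bool) (x : ℤ) : ℕ :=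
  {y : ℤ | x < y ∧ ρ y = true}.ncard

/-- The cut-off operator `R_k`: keeps only the `k` rightmost particles. -/
noncomputable def Rk (k : ℕ) (ρ : ℤ → Bool) : ℤ → Bool :=
  fun x => if qS ρ x < k then ρ x else false

/-- The push-back operator `B_n`: pushes all particles back into `(-∞, n]`,
preserving the exclusion. -/
noncomputable def Bn (n : ℤ) (ρ : ℤ → Bool) : ℤ → Bool :=
  fun x =>
    if n < x then false
    else if n - x < (qS ρ x : ℤ) then true
    else ρ x

/-- The jump operator `J_m`: exchanges the values of `ρ` at `m` and `m+1` if
`ρ(m) = 1` and `ρ(m+1) = 0`, and leaves `ρ` unchanged otherwise. -/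
def Jm (m : ℤ) (ρ : ℤ → Bool) : ℤ → Bool :=
  fun x =>
    if ρ m = true ∧ ρ (m + 1) = false then
      if x = m then ρ (m + 1) else if x = m + 1 then ρ m else ρ x
    else ρ x

lemma finite_qset (ρ : ℤ → Bool) (hρ : BddSupport ρ) (x : ℤ) :
    {y : ℤ | x < y ∧ ρ y = true}.Finite := by
  obtain ⟨N, hN⟩ := hρ
  apply (Set.finite_Icc (x+1) N).subset
  rintro y ⟨h1, h2⟩
  simp only [Set.mem_Icc]
  exact ⟨by omega, hN h2⟩

lemma bdd_Rk (k : ℕ) (ρ : ℤ → Bool) (hρ : BddSupport ρ) : BddSupport (Rk k ρ) := by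
  obtain ⟨N, hN⟩ := hρ
  refine ⟨N, fun x hx => ?_⟩
  simp only [Set.mem_setOf_eq, Rk] at hx
  by_cases h : qS ρ x < k
  · rw [if_pos h] at hx; exact hN hx
  · rw [if_neg h] at hx; exact absurd hx (by simp)

lemma Jm_apply_ne (m : ℤ) (ρ : ℤ → Bool) (x : ℤ) (h1 : x ≠ m) (h2 : x ≠ m + 1) :
    Jm m ρ x = ρ x := by
  simp [Jm, h1, h2]

lemma Jm_m_eq (m : ℤ) (ρ : ℤ → Bool) (h : ρ m = true ∧ ρ (m+1) = false) :
    Jm m ρ m = false := by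
  simp [Jm, h.1, h.2]

lemma Jm_m1_eq (m : ℤ) (ρ : ℤ → Bool) (h : ρ m = true ∧ ρ (m+1) = false) :
    Jm m ρ (m+1) = true := by
  have hne : (m+1 : ℤ) ≠ m := by omega
  simp [Jm, h.1, h.2, hne]

lemma Jm_id (m : ℤ) (f : ℤ → Bool) (h : ¬(f m = true ∧ f (m+1) = false)) :
    Jm m f = f := by
  funext x
  simp only [Jm, if_neg h]

lemma bdd_Jm (m : ℤ) (ρ : ℤ → Bool) (hρ : BddSupport ρ) : BddSupport (Jm m ρ) := by
  obtain ⟨N, hN⟩ := hρ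
  refine ⟨max N (m+1), fun x hx => ?_⟩
  simp only [Set.mem_setOf_eq] at hx
  rcases eq_or_ne x m with rfl|h1
  · exact le_max_of_le_right (by omega)
  · rcases eq_or_ne x (m+1) with rfl|h2
    · exact le_max_of_le_right le_rfl
    · rw [Jm_apply_ne m ρ x h1 h2] at hx
      exact le_max_of_le_left (hN hx)

lemma qS_succ_false (ρ : ℤ → Bool) (x : ℤ) (h : ρ (x+1) = false) :
    qS ρ x = qS ρ (x+1) := by
  unfold qS
  congr 1
  ext y
  simp only [Set.mem_setOf_eq]
  constructor
  · rintro ⟨h1, h2⟩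
    refine ⟨?_, h2⟩
    rcases eq_or_ne y (x+1) with rfl|hne
    · rw [h] at h2; exact absurd h2 (by simp)
    · omega
  · rintro ⟨h1, h2⟩
    exact ⟨by omega, h2⟩

lemma qS_succ_true (ρ : ℤ → Bool) (hρ : BddSupport ρ) (x : ℤ) (h : ρ (x+1) = true) :
    qS ρ x = qS ρ (x+1) + 1 := by
  have hfin := finite_qset ρ hρ (x+1)
  have hset : {y : ℤ | x < y ∧ ρ y = true}
      = insert (x+1) {y : ℤ | x+1 < y ∧ ρ y = true} := by
    ext y
    simp only [Set.mem_setOf_eq, Set.mem_insert_iff]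
    constructor
    · rintro ⟨h1, h2⟩
      rcases eq_or_ne y (x+1) with rfl|hne
      · exact Or.inl rfl
      · exact Or.inr ⟨by omega, h2⟩
    · rintro (rfl | ⟨h1, h2⟩)
      · exact ⟨by omega, h⟩
      · exact ⟨by omega, h2⟩
  unfold qS
  rw [hset, Set.ncard_insert_of_notMem (by simp) hfin]

lemma qS_Jm_ge (ρ : ℤ → Bool) (m x : ℤ) (hx : m + 1 ≤ x) :
    qS (Jm m ρ) x = qS ρ x := by
  unfold qS
  congr 1
  ext y
  simp only [Set.mem_setOf_eq]
  constructor <;> rintro ⟨h1, h2⟩ <;> refine ⟨h1, ?_⟩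
  · rwa [Jm_apply_ne m ρ y (by omega) (by omega)] at h2
  · rwa [Jm_apply_ne m ρ y (by omega) (by omega)]

lemma qS_Jm_lt (m : ℤ) (ρ : ℤ → Bool) (hρ : BddSupport ρ)
    (hswap : ρ m = true ∧ ρ (m+1) = false) (x : ℤ) (hx : x < m) :
    qS (Jm m ρ) x = qS ρ x := by
  have hfin := finite_qset ρ hρ x
  have hTeq : {y : ℤ | x < y ∧ Jm m ρ y = true}
      = insert (m+1) ({y : ℤ | x < y ∧ ρ y = true} \ {m}) := by
    ext y
    simp only [Set.mem_insert_iff, Set.mem_diff, Set.mem_setOf_eq, Set.mem_singleton_iff]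
    constructor
    · rintro ⟨h1, h2⟩
      rcases eq_or_ne y (m+1) with rfl|hy1
      · exact Or.inl rfl
      · rcases eq_or_ne y m with hy2|hy2
        · rw [hy2, Jm_m_eq m ρ hswap] at h2
          exact absurd h2 (by simp)
        · rw [Jm_apply_ne m ρ y hy2 hy1] at h2
          exact Or.inr ⟨⟨h1, h2⟩, hy2⟩
    · rintro (rfl | ⟨⟨h1, h2⟩, h3⟩)
      · exact ⟨by omega, Jm_m1_eq m ρ hswap⟩
      · refine ⟨h1, ?_⟩
        rcases eq_or_ne y (m+1) with rfl|hy1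
        · exact Jm_m1_eq m ρ hswap
        · rw [Jm_apply_ne m ρ y h3 hy1]; exact h2
  have hnot : (m+1 : ℤ) ∉ {y : ℤ | x < y ∧ ρ y = true} \ {m} := by
    rintro ⟨⟨-, h2⟩, -⟩
    rw [hswap.2] at h2
    exact absurd h2 (by simp)
  have hmem : m ∈ {y : ℤ | x < y ∧ ρ y = true} := by exact ⟨hx, hswap.1⟩
  unfold qS
  rw [hTeq, Set.ncard_insert_of_notMem hnot hfin.diff]
  exact Set.ncard_diff_singleton_add_one hmem hfin

lemma qS_Jm_m (m : ℤ) (ρ : ℤ → Bool) (hρ : BddSupport ρ)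
    (hswap : ρ m = true ∧ ρ (m+1) = false) :
    qS (Jm m ρ) m = qS ρ m + 1 := by
  have h1 : qS ρ m = qS ρ (m+1) := qS_succ_false ρ m hswap.2
  have h2 : qS (Jm m ρ) m = qS (Jm m ρ) (m+1) + 1 :=
    qS_succ_true (Jm m ρ) (bdd_Jm m ρ hρ) m (Jm_m1_eq m ρ hswap)
  have h3 : qS (Jm m ρ) (m+1) = qS ρ (m+1) := qS_Jm_ge ρ m (m+1) le_rfl
  omega

lemma Bn_Jm_swap (n m : ℤ) (hmn : m + 1 ≤ n) (σ : ℤ → Bool) (hσ : BddSupport σ)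
    (h1 : σ m = true) (h2 : σ (m+1) = false) :
    Bn n (Jm m σ) = Jm m (Bn n σ) := by
  have hswap : σ m = true ∧ σ (m+1) = false := ⟨h1, h2⟩
  have hqm : qS σ m = qS σ (m+1) := qS_succ_false σ m h2
  have hτm : qS (Jm m σ) m = qS σ (m+1) + 1 := by
    rw [qS_Jm_m m σ hσ hswap]; omega
  have hτ1 : qS (Jm m σ) (m+1) = qS σ (m+1) := qS_Jm_ge σ m (m+1) le_rfl
  have hBm : Bn n σ m = true := by
    simp only [Bn]
    rw [if_neg (by omega : ¬ n < m)]
    split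
    · rfl
    · exact h1
  by_cases hc : n - (m+1) < (qS σ (m+1) : ℤ)
  · have hB1 : Bn n σ (m+1) = true := by
      simp only [Bn]
      rw [if_neg (by omega : ¬ n < m + 1), if_pos hc]
    rw [Jm_id m (Bn n σ) (by rw [hB1]; rintro ⟨-, h⟩; exact absurd h (by simp))]
    funext x
    rcases eq_or_ne x m with hx|hx1
    · rw [hx]
      rw [hBm]
      simp only [Bn, hτm]
      rw [if_neg (by omega : ¬ n < m), if_pos (by push_cast; omega)]
    · rcases eq_or_ne x (m+1) with rfl|hx2
      · rw [hB1]
        simp only [Bn, hτ1]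
        rw [if_neg (by omega : ¬ n < m + 1), if_pos hc]
      · have hqx : qS (Jm m σ) x = qS σ x := by
          rcases lt_or_ge x m with h|h
          · exact qS_Jm_lt m σ hσ hswap x h
          · exact qS_Jm_ge σ m x (by omega)
        have hvx : Jm m σ x = σ x := Jm_apply_ne m σ x hx1 hx2
        simp only [Bn, hqx, hvx]
  · have hB1 : Bn n σ (m+1) = false := by
      simp only [Bn]
      rw [if_neg (by omega : ¬ n < m + 1), if_neg hc]
      exact h2
    have hcond : Bn n σ m = true ∧ Bn n σ (m+1) = false := ⟨hBm, hB1⟩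
    funext x
    rcases eq_or_ne x m with hx|hx1
    · rw [hx]
      rw [Jm_m_eq m (Bn n σ) hcond]
      simp only [Bn, hτm]
      rw [if_neg (by omega : ¬ n < m), if_neg (by push_cast; omega)]
      exact Jm_m_eq m σ hswap
    · rcases eq_or_ne x (m+1) with rfl|hx2
      · rw [Jm_m1_eq m (Bn n σ) hcond]
        simp only [Bn, hτ1]
        rw [if_neg (by omega : ¬ n < m + 1), if_neg hc]
        exact Jm_m1_eq m σ hswap
      · rw [Jm_apply_ne m (Bn n σ) x hx1 hx2]
        have hqx : qS (Jm m σ) x = qS σ x := by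
          rcases lt_or_ge x m with h|h
          · exact qS_Jm_lt m σ hσ hswap x h
          · exact qS_Jm_ge σ m x (by omega)
        have hvx : Jm m σ x = σ x := Jm_apply_ne m σ x hx1 hx2
        simp only [Bn, hqx, hvx]

lemma Jm_Bn_fixed (n m : ℤ) (hmn : m + 1 ≤ n) (σ : ℤ → Bool)
    (h1 : σ m = false) (h2 : σ (m+1) = false) :
    Jm m (Bn n σ) = Bn n σ := by
  apply Jm_id
  rintro ⟨hBm, hB1⟩
  have hqm : qS σ m = qS σ (m+1) := qS_succ_false σ m h2
  simp only [Bn] at hBm hB1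
  rw [if_neg (by omega : ¬ n < m)] at hBm
  rw [if_neg (by omega : ¬ n < m + 1)] at hB1
  split at hBm
  · rename_i hlt
    rw [if_pos (by omega : n - (m+1) < (qS σ (m+1) : ℤ))] at hB1
    exact absurd hB1 (by simp)
  · rw [h1] at hBm
    exact absurd hBm (by simp)

lemma Jm_Bn_fixed' (n m : ℤ) (hmn : m + 1 ≤ n) (σ : ℤ → Bool)
    (h2 : σ (m+1) = true) :
    Jm m (Bn n σ) = Bn n σ := by
  apply Jm_id
  rintro ⟨-, hB1⟩
  simp only [Bn] at hB1
  rw [if_neg (by omega : ¬ n < m + 1)] at hB1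
  split at hB1
  · exact absurd hB1 (by simp)
  · rw [h2] at hB1
    exact absurd hB1 (by simp)

lemma Rk_Jm_of_lt (k : ℕ) (m : ℤ) (ρ : ℤ → Bool) (hρ : BddSupport ρ)
    (hswap : ρ m = true ∧ ρ (m+1) = false) (hk : qS ρ m < k) :
    Rk k (Jm m ρ) = Jm m (Rk k ρ) := by
  have hq1 : qS ρ (m+1) = qS ρ m := (qS_succ_false ρ m hswap.2).symm
  have hσswap : Rk k ρ m = true ∧ Rk k ρ (m+1) = false := by
    constructor
    · simp only [Rk]; rw [if_pos hk]; exact hswap.1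
    · simp only [Rk]; split
      · exact hswap.2
      · rfl
  funext x
  rcases eq_or_ne x m with hx|hx1
  · rw [hx]
    rw [Jm_m_eq m (Rk k ρ) hσswap]
    simp only [Rk, Jm_m_eq m ρ hswap]
    split <;> rfl
  · rcases eq_or_ne x (m+1) with rfl|hx2
    · rw [Jm_m1_eq m (Rk k ρ) hσswap]
      simp only [Rk]
      rw [qS_Jm_ge ρ m (m+1) le_rfl, if_pos (by omega : qS ρ (m+1) < k)]
      exact Jm_m1_eq m ρ hswap
    · rw [Jm_apply_ne m (Rk k ρ) x hx1 hx2]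
      have hqx : qS (Jm m ρ) x = qS ρ x := by
        rcases lt_or_ge x m with h|h
        · exact qS_Jm_lt m ρ hρ hswap x h
        · exact qS_Jm_ge ρ m x (by omega)
      have hvx : Jm m ρ x = ρ x := Jm_apply_ne m ρ x hx1 hx2
      simp only [Rk, hqx, hvx]

lemma Rk_Jm_of_ge (k : ℕ) (m : ℤ) (ρ : ℤ → Bool) (hρ : BddSupport ρ)
    (hswap : ρ m = true ∧ ρ (m+1) = false) (hk : k ≤ qS ρ m) :
    Rk k (Jm m ρ) = Rk k ρ := by
  have hq1 : qS ρ (m+1) = qS ρ m := (qS_succ_false ρ m hswap.2).symm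
  funext x
  rcases eq_or_ne x m with hx|hx1
  · rw [hx]
    simp only [Rk, Jm_m_eq m ρ hswap]
    rw [if_neg (by omega : ¬ qS ρ m < k)]
    split <;> rfl
  · rcases eq_or_ne x (m+1) with rfl|hx2
    · simp only [Rk, qS_Jm_ge ρ m (m+1) le_rfl]
      rw [if_neg (by omega : ¬ qS ρ (m+1) < k), if_neg (by omega : ¬ qS ρ (m+1) < k)]
    · have hqx : qS (Jm m ρ) x = qS ρ x := by
        rcases lt_or_ge x m with h|h
        · exact qS_Jm_lt m ρ hρ hswap x h
        · exact qS_Jm_ge ρ m x (by omega)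
      have hvx : Jm m ρ x = ρ x := Jm_apply_ne m ρ x hx1 hx2
      simp only [Rk, hqx, hvx]

/-- Lemma 3.2(i): if `1 ≤ m ≤ n - 1`, then `B_n R_k J_m = J_m B_n R_k`. -/
theorem Bn_Rk_Jm_comm (n : ℤ) (k : ℕ) (m : ℤ) (hm1 : 1 ≤ m) (hm2 : m ≤ n - 1)
    (ρ : ℤ → Bool) (hρ : BddSupport ρ) :
    Bn n (Rk k (Jm m ρ)) = Jm m (Bn n (Rk k ρ)) := by
  have hmn : m + 1 ≤ n := by omega
  by_cases hswap : ρ m = true ∧ ρ (m+1) = false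
  · by_cases hk : qS ρ m < k
    · have hσ1 : Rk k ρ m = true := by
        simp only [Rk]; rw [if_pos hk]; exact hswap.1
      have hσ2 : Rk k ρ (m+1) = false := by
        simp only [Rk]; split
        · exact hswap.2
        · rfl
      rw [Rk_Jm_of_lt k m ρ hρ hswap hk]
      exact Bn_Jm_swap n m hmn (Rk k ρ) (bdd_Rk k ρ hρ) hσ1 hσ2
    · have hσ1 : Rk k ρ m = false := by
        simp only [Rk]; rw [if_neg hk]
      have hσ2 : Rk k ρ (m+1) = false := by
        simp only [Rk]; split
        · exact hswap.2
        · rfl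
      rw [Rk_Jm_of_ge k m ρ hρ hswap (not_lt.1 hk),
        Jm_Bn_fixed n m hmn (Rk k ρ) hσ1 hσ2]
  · rw [Jm_id m ρ hswap]
    by_cases h1 : Rk k ρ (m+1) = true
    · rw [Jm_Bn_fixed' n m hmn (Rk k ρ) h1]
    · have h1' : Rk k ρ (m+1) = false := by
        revert h1; cases Rk k ρ (m+1) <;> simp
      have hm0 : Rk k ρ m = false := by
        by_cases hρm : ρ m = true
        · have hρ1 : ρ (m+1) = true := by
            rcases Bool.eq_false_or_eq_true (ρ (m+1)) with h|h
            · exact h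
            · exact absurd ⟨hρm, h⟩ hswap
          have hk1 : ¬ qS ρ (m+1) < k := by
            intro hlt
            simp only [Rk, if_pos hlt, hρ1] at h1'
            exact absurd h1' (by simp)
          have hqm : qS ρ m = qS ρ (m+1) + 1 := qS_succ_true ρ hρ m hρ1
          simp only [Rk]
          rw [if_neg (by omega : ¬ qS ρ m < k)]
        · have hρm' : ρ m = false := by
            rcases Bool.eq_false_or_eq_true (ρ m) with h|h
            · exact absurd h hρm
            · exact h

          simp only [Rk, hρm']
          split <;> rfl
      rw [Jm_Bn_fixed n m hmn (Rk k ρ) hm0 h1']
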